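/- If c has a justifiability representation for some strict preference (i.e., there exists a total order ≻ such that (≻, c) has a justifiability representation with c a choice function), then the revealed preference relation P is acyclic, where c(A ∪ {a}) P a is declared whenever c(B) ≠ c(B ∪ {a}) for some B ⊇ A and a ≠ c(A ∪ {a}). Moreover, the true preference in every justifiability representation for c extends P. -/

import Mathlib

open Finset

/-- A total (weak) order: complete, transitive, antisymmetric. -/
def TotalOrderRel {α : Type*} (r : α → α → Prop) : Prop :=
  (∀ a b : α, r a b ∨ r b a) ∧ Transitive r ∧ ∀ a b : α, r a b → r b a → a = b

/-- The set of `r`-maximal elements of a set `S`. -/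
def argmaxOn {α : Type*} (r : α → α → Prop) (S : Set α) : Set α :=
  {x ∈ S | ∀ y ∈ S, r x y}

/-- The justifiable set `M(A)`. -/
def justSet {α : Type*} (M : Set (α → α → Prop)) (A : Finset α) : Set α :=
  ⋃ r ∈ M, argmaxOn r (A : Set α)

/-- A justifiability representation for a choice function `c`: `c A` is the
`pref`-maximum of the justifiable set `M(A)`. -/
def JustRepFn {α : Type*} (pref : α → α → Prop) (c : Finset α → α)
    (M : Set (α → α → Prop)) : Prop :=
  M.Nonempty ∧ (∀ r ∈ M, TotalOrderRel r) ∧ TotalOrderRel pref ∧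
    ∀ A : Finset α, A.Nonempty →
      c A ∈ justSet M A ∧ ∀ y ∈ justSet M A, pref (c A) y

/-- Revealed preference: `x P a` if removing `a` matters for some menu `B` and
`x` is chosen over `a` from some `A ∪ {a}` with `A ⊆ B`. -/
def RevP {α : Type*} [DecidableEq α] (c : Finset α → α) (x a : α) : Prop :=
  ∃ B A : Finset α, B.Nonempty ∧ A ⊆ B ∧ c B ≠ c (insert a B) ∧
    a ≠ c (insert a A) ∧ x = c (insert a A)

lemma totalOrderRel.refl {α : Type*} {r : α → α → Prop} (h : TotalOrderRel r) (a : α) :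
    r a a := (h.1 a a).elim id id

lemma mem_justSet {α : Type*} {M : Set (α → α → Prop)} {A : Finset α} {x : α} :
    x ∈ justSet M A ↔ ∃ r ∈ M, x ∈ A ∧ ∀ y ∈ A, r x y := by
  simp only [justSet, Set.mem_iUnion, argmaxOn, Set.mem_setOf_eq, Finset.mem_coe, exists_prop]

lemma exists_argmax {α : Type*} {r : α → α → Prop} (hr : TotalOrderRel r)
    (s : Finset α) (hs : s.Nonempty) : ∃ x ∈ s, ∀ y ∈ s, r x y := by
  classical
  induction s using Finset.induction_on with
  | empty => exact absurd hs (by simp)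
  | @insert a t ha ih =>
    rcases t.eq_empty_or_nonempty with rfl | htne
    · refine ⟨a, by simp, ?_⟩
      intro y hy
      simp only [Finset.mem_insert, Finset.notMem_empty, or_false] at hy
      subst hy; exact totalOrderRel.refl hr _
    · obtain ⟨x, hx, hxmax⟩ := ih htne
      rcases hr.1 a x with h | h
      · refine ⟨a, Finset.mem_insert_self _ _, ?_⟩
        intro y hy
        rcases Finset.mem_insert.1 hy with rfl | hy
        · exact totalOrderRel.refl hr _
        · exact hr.2.1 h (hxmax y hy)
      · refine ⟨x, Finset.mem_insert_of_mem hx, ?_⟩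
        intro y hy
        rcases Finset.mem_insert.1 hy with rfl | hy
        · exact h
        · exact hxmax y hy

/-- a justifiability representation implies that revealed
preference is acyclic, and every true preference extends it. -/
theorem justRepFn_revP_acyclic {α : Type*} [DecidableEq α] (c : Finset α → α)
    (hc : ∀ A : Finset α, A.Nonempty → c A ∈ A)
    (hrep : ∃ (pref : α → α → Prop) (M : Set (α → α → Prop)), JustRepFn pref c M) :
    (∀ a : α, ¬ Relation.TransGen (RevP c) a a) ∧
    ∀ (pref : α → α → Prop) (M : Set (α → α → Prop)), JustRepFn pref c M →
      ∀ x a : α, RevP c x a → pref x a ∧ ¬ pref a x := by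
  have key : ∀ (pref : α → α → Prop) (M : Set (α → α → Prop)), JustRepFn pref c M →
      ∀ x a : α, RevP c x a → pref x a ∧ ¬ pref a x := by
    rintro pref M ⟨hMne, hMtot, hpref, hmax⟩ x a ⟨B, A, hBne, hAB, hBB, haA, rfl⟩
    -- `a` is justifiable in `insert a B`
    have hins : a ∈ justSet M (insert a B) := by
      by_contra hna
      apply hBB
      -- then the justifiable sets agree
      have hEq : justSet M (insert a B) = justSet M B := by
        ext z
        rw [mem_justSet, mem_justSet]
        constructor
        · rintro ⟨r, hr, hz, hzmax⟩
          rcases Finset.mem_insert.1 hz with rfl | hz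
          · exact absurd (mem_justSet.2 ⟨r, hr, Finset.mem_insert_self _ _, hzmax⟩) hna
          · exact ⟨r, hr, hz, fun y hy => hzmax y (Finset.mem_insert_of_mem hy)⟩
        · rintro ⟨r, hr, hz, hzmax⟩
          have htot := hMtot r hr
          rcases htot.1 z a with h | h
          · refine ⟨r, hr, Finset.mem_insert_of_mem hz, ?_⟩
            intro y hy
            rcases Finset.mem_insert.1 hy with rfl | hy
            · exact h
            · exact hzmax y hy
          · refine absurd (mem_justSet.2 ⟨r, hr, Finset.mem_insert_self _ _, ?_⟩) hna
            intro y hy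
            rcases Finset.mem_insert.1 hy with rfl | hy
            · exact totalOrderRel.refl htot y
            · exact htot.2.1 h (hzmax y hy)
      obtain ⟨h1, h2⟩ := hmax B hBne
      obtain ⟨h3, h4⟩ := hmax (insert a B) ⟨a, Finset.mem_insert_self _ _⟩
      exact hpref.2.2 _ _ (h2 _ (hEq ▸ h3)) (h4 _ (hEq.symm ▸ h1))
    -- hence `a` is justifiable in `insert a A`
    obtain ⟨r, hr, -, hzmax⟩ := mem_justSet.1 hins
    have hinsA : a ∈ justSet M (insert a A) := by
      refine mem_justSet.2 ⟨r, hr, Finset.mem_insert_self _ _, ?_⟩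
      intro y hy
      exact hzmax y (Finset.insert_subset_insert a hAB hy)
    obtain ⟨_, h4⟩ := hmax (insert a A) ⟨a, Finset.mem_insert_self _ _⟩
    have hxa : pref (c (insert a A)) a := h4 a hinsA
    exact ⟨hxa, fun h => haA (hpref.2.2 _ _ h hxa)⟩
  obtain ⟨pref, M, hrep'⟩ := hrep
  have hpref := hrep'.2.2.1
  refine ⟨?_, key⟩
  intro a hcyc
  -- the strict part of pref is transitive and irreflexive
  have hsub : ∀ x y : α, RevP c x y → pref x y ∧ ¬ pref y x := key pref M hrep'
  have htrans : Transitive (fun x y => pref x y ∧ ¬ pref y x) := by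
    rintro x y z ⟨h1, h2⟩ ⟨h3, h4⟩
    exact ⟨hpref.2.1 h1 h3, fun h => h4 (hpref.2.1 h h1)⟩
  have h2 : pref a a ∧ ¬ pref a a := by
    have h3 := Relation.TransGen.mono hsub a a hcyc
    rwa [@Relation.transGen_eq_self _ _ ⟨htrans⟩] at h3
  exact h2.2 h2.1
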